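/- Let H be a real Hilbert space and let b : H × H → ℝ be a continuous symmetric bilinear form. Let (x_k), (y_k) ⊂ H with x_k ⇀ x weakly in H and x_k − y_k → x − y strongly in H for some x, y ∈ H. Then b(x_k,x_k) − b(y_k,y_k) → b(x,x) − b(y,y). -/

import Mathlib

open Filter Topology

set_option maxHeartbeats 1000000

/-- If `b` is a continuous symmetric bilinear form on a real Hilbert space,
`x_k ⇀ x` weakly and `x_k − y_k → x − y` strongly, then
`b(x_k,x_k) − b(y_k,y_k) → b(x,x) − b(y,y)`. -/
theorem bilinear_difference_convergence
    {H : Type*} [NormedAddCommGroup H] [InnerProductSpace ℝ H] [CompleteSpace H]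
    (b : H →L[ℝ] H →L[ℝ] ℝ)
    (hsymm : ∀ x y : H, b x y = b y x)
    (x y : ℕ → H) (x₀ y₀ : H)
    (hweak : ∀ z : H, Tendsto (fun k => (inner ℝ (x k) z : ℝ)) atTop (𝓝 (inner ℝ x₀ z)))
    (hstrong : Tendsto (fun k => ‖(x k - y k) - (x₀ - y₀)‖) atTop (𝓝 0)) :
    Tendsto (fun k => b (x k) (x k) - b (y k) (y k)) atTop
      (𝓝 (b x₀ x₀ - b y₀ y₀)) := by
  set d : ℕ → H := fun k => x k - y k with hd_def
  set d₀ : H := x₀ - y₀ with hd₀_def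
  -- x is norm bounded (Banach–Steinhaus)
  obtain ⟨C, hC⟩ : ∃ C, ∀ k, ‖x k‖ ≤ C := by
    have h : ∀ z : H, ∃ M, ∀ k, ‖(innerSL ℝ (x k)) z‖ ≤ M := by
      intro z
      have hb := ((hweak z).norm).bddAbove_range
      obtain ⟨M, hM⟩ := hb
      exact ⟨M, fun k => hM ⟨k, rfl⟩⟩
    obtain ⟨C, hC⟩ := banach_steinhaus h
    refine ⟨C, fun k => ?_⟩
    have := hC k
    simpa using this
  have hCnn : 0 ≤ C := le_trans (norm_nonneg _) (hC 0)
  -- d → d₀ strongly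
  have hd : Tendsto d atTop (𝓝 d₀) := tendsto_iff_norm_sub_tendsto_zero.mpr hstrong
  -- b(d k, d k) → b(d₀, d₀)
  have hcont : Continuous fun p : H × H => b p.1 p.2 := b.continuous₂
  have hdd : Tendsto (fun k => b (d k) (d k)) atTop (𝓝 (b d₀ d₀)) :=
    (hcont.tendsto (d₀, d₀)).comp (hd.prodMk_nhds hd)
  -- b(d₀, x k) → b(d₀, x₀) via Riesz
  have hfix : Tendsto (fun k => b d₀ (x k)) atTop (𝓝 (b d₀ x₀)) := by
    obtain ⟨v, hv⟩ := (InnerProductSpace.toDual ℝ H).surjective (b d₀)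
    have hv' : ∀ z : H, b d₀ z = (inner ℝ z v : ℝ) := by
      intro z
      rw [← hv]
      simp [InnerProductSpace.toDual_apply_apply, real_inner_comm]
    simp only [hv']
    exact hweak v
  -- b(d k - d₀, x k) → 0
  have herr : Tendsto (fun k => b (d k - d₀) (x k)) atTop (𝓝 0) := by
    have hbound : ∀ k, ‖b (d k - d₀) (x k)‖ ≤ ‖b‖ * C * ‖d k - d₀‖ := by
      intro k
      calc ‖b (d k - d₀) (x k)‖ ≤ ‖b‖ * ‖d k - d₀‖ * ‖x k‖ := b.le_opNorm₂ _ _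
        _ ≤ ‖b‖ * ‖d k - d₀‖ * C := by
            have hn : (0:ℝ) ≤ ‖b‖ * ‖d k - d₀‖ :=
              mul_nonneg (ContinuousLinearMap.opNorm_nonneg b) (norm_nonneg _)
            exact mul_le_mul_of_nonneg_left (hC k) hn
        _ = ‖b‖ * C * ‖d k - d₀‖ := by ring
    have hlim : Tendsto (fun k => ‖b‖ * C * ‖d k - d₀‖) atTop (𝓝 0) := by
      have := hstrong.const_mul (‖b‖ * C)
      simpa using this
    exact squeeze_zero_norm hbound hlim
  -- b(d k, x k) → b(d₀, x₀)
  have hdx : Tendsto (fun k => b (d k) (x k)) atTop (𝓝 (b d₀ x₀)) := by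
    have := herr.add hfix
    rw [zero_add] at this
    refine this.congr fun k => ?_
    simp [map_sub, ContinuousLinearMap.sub_apply]
  -- key algebraic identity
  have key : ∀ (u w : H), b u u - b w w = 2 * b (u - w) u - b (u - w) (u - w) := by
    intro u w
    simp only [map_sub, ContinuousLinearMap.sub_apply]
    rw [hsymm w u]
    ring
  have : Tendsto (fun k => 2 * b (d k) (x k) - b (d k) (d k)) atTop
      (𝓝 (2 * b d₀ x₀ - b d₀ d₀)) := ((hdx.const_mul 2).sub hdd)
  have hfin := this.congr fun k => (key (x k) (y k)).symm
  rw [show 2 * b d₀ x₀ - b d₀ d₀ = b x₀ x₀ - b y₀ y₀ from (key x₀ y₀).symm] at hfin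
  exact hfin
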